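/- arXiv:2008.03235 — 3 statements merged into one kernel-verified Lean document; each statement's English description precedes it below -/
import Mathlib

section
/- In the non-compliance SCM, the exclusive treatment effect assumption holds: P is conditionally independent of Y given (X, T). -/
open Classical Finset

/-- Probability of an event in a finite probability space given by a mass function. -/
noncomputable def Pr {Ω : Type*} [Fintype Ω] (pr : Ω → ℝ) (A : Ω → Prop) : ℝ :=
  ∑ ω, if A ω then pr ω else 0

/-- Conditional probability `P(A | B)`. -/
noncomputable def cPr {Ω : Type*} [Fintype Ω] (pr : Ω → ℝ) (A B : Ω → Prop) : ℝ :=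
  Pr pr (fun ω => A ω ∧ B ω) / Pr pr B

lemma swap_sum {Ω : Type*} [Fintype Ω] {β : Type*} (s : Finset β) (f : β → Ω → ℝ) :
    (∑ b ∈ s, ∑ ω, f b ω) = ∑ ω, ∑ b ∈ s, f b ω := Finset.sum_comm

lemma pull_ite {β : Type*} (s : Finset β) (c : Prop) [Decidable c] (f : β → ℝ) :
    (∑ b ∈ s, if c then f b else 0) = if c then ∑ b ∈ s, f b else 0 := by
  split_ifs <;> simp

lemma Pr_congr {Ω : Type*} [Fintype Ω] (pr : Ω → ℝ) {A B : Ω → Prop}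
    (h : ∀ ω, A ω ↔ B ω) : Pr pr A = Pr pr B := by
  unfold Pr
  exact Finset.sum_congr rfl fun ω _ => by by_cases hB : B ω <;> simp [hB, h ω]

lemma sum_split {𝒰 NXt NTt NYt : Type*}
    (sU : Finset 𝒰) (sX : Finset NXt) (sT : Finset NTt) (sY : Finset NYt)
    (F : Bool → NTt → ℝ) (H : 𝒰 → NXt → NYt → ℝ) :
    (∑ a : Bool, ∑ u ∈ sU, ∑ nx ∈ sX, ∑ nt ∈ sT, ∑ ny ∈ sY, F a nt * H u nx ny)
      = (∑ a : Bool, ∑ nt ∈ sT, F a nt) * (∑ u ∈ sU, ∑ nx ∈ sX, ∑ ny ∈ sY, H u nx ny) := by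
  simp only [← Finset.mul_sum, ← Finset.sum_mul]

set_option maxHeartbeats 2000000 in
lemma pr_expand {Ω 𝒰 NXt NTt NYt : Type*} [Fintype Ω]
    (pr : Ω → ℝ)
    (NP : Ω → Bool) (NU : Ω → 𝒰) (NXn : Ω → NXt) (NTn : Ω → NTt) (NYn : Ω → NYt)
    (hindep : ∀ (a : Bool) (u : 𝒰) (nx : NXt) (nt : NTt) (ny : NYt),
      Pr pr (fun ω => NP ω = a ∧ NU ω = u ∧ NXn ω = nx ∧ NTn ω = nt ∧ NYn ω = ny)
        = Pr pr (fun ω => NP ω = a) * Pr pr (fun ω => NU ω = u)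
          * Pr pr (fun ω => NXn ω = nx) * Pr pr (fun ω => NTn ω = nt)
          * Pr pr (fun ω => NYn ω = ny))
    (g : Bool → 𝒰 → NXt → NTt → NYt → Prop) :
    Pr pr (fun ω => g (NP ω) (NU ω) (NXn ω) (NTn ω) (NYn ω))
      = ∑ a : Bool, ∑ u ∈ image NU univ, ∑ nx ∈ image NXn univ,
          ∑ nt ∈ image NTn univ, ∑ ny ∈ image NYn univ,
          (if g a u nx nt ny then
            Pr pr (fun ω => NP ω = a) * Pr pr (fun ω => NU ω = u)
              * Pr pr (fun ω => NXn ω = nx) * Pr pr (fun ω => NTn ω = nt)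
              * Pr pr (fun ω => NYn ω = ny) else 0) := by
  have step : ∀ (a : Bool) (u : 𝒰) (nx : NXt) (nt : NTt) (ny : NYt),
      (if g a u nx nt ny then
        Pr pr (fun ω => NP ω = a) * Pr pr (fun ω => NU ω = u)
          * Pr pr (fun ω => NXn ω = nx) * Pr pr (fun ω => NTn ω = nt)
          * Pr pr (fun ω => NYn ω = ny) else 0)
      = ∑ ω, (if NP ω = a ∧ NU ω = u ∧ NXn ω = nx ∧ NTn ω = nt ∧ NYn ω = ny then
              (if g a u nx nt ny then pr ω else 0) else 0) := by
    intro a u nx nt ny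
    rw [← hindep]
    by_cases h : g a u nx nt ny
    · simp only [h, if_true, Pr]
      exact Finset.sum_congr rfl fun ω _ => by congr
    · simp [h, Pr]
  rw [show (∑ a : Bool, ∑ u ∈ image NU univ, ∑ nx ∈ image NXn univ,
          ∑ nt ∈ image NTn univ, ∑ ny ∈ image NYn univ,
          (if g a u nx nt ny then
            Pr pr (fun ω => NP ω = a) * Pr pr (fun ω => NU ω = u)
              * Pr pr (fun ω => NXn ω = nx) * Pr pr (fun ω => NTn ω = nt)
              * Pr pr (fun ω => NYn ω = ny) else 0))
      = ∑ a : Bool, ∑ u ∈ image NU univ, ∑ nx ∈ image NXn univ,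
          ∑ nt ∈ image NTn univ, ∑ ny ∈ image NYn univ,
          ∑ ω, (if NP ω = a ∧ NU ω = u ∧ NXn ω = nx ∧ NTn ω = nt ∧ NYn ω = ny then
              (if g a u nx nt ny then pr ω else 0) else 0) from
    Finset.sum_congr rfl fun a _ => Finset.sum_congr rfl fun u _ =>
      Finset.sum_congr rfl fun nx _ => Finset.sum_congr rfl fun nt _ =>
        Finset.sum_congr rfl fun ny _ => step a u nx nt ny]
  simp only [swap_sum (Ω := Ω)]
  unfold Pr
  refine Finset.sum_congr rfl fun ω _ => ?_
  simp only [ite_and]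
  simp only [pull_ite]
  simp only [Finset.sum_ite_eq]
  simp [Finset.mem_image]

/-- Exclusive treatment effect: in the non-compliance SCM,
P is conditionally independent of Y given (X, T), whenever the conditioning
event has positive probability. -/
theorem stmt3
    {Ω 𝒰 𝒳 NXt NTt NYt : Type*} [Fintype Ω]
    (pr : Ω → ℝ) (hpr : ∀ ω, 0 ≤ pr ω) (hsum : ∑ ω, pr ω = 1)
    (NP : Ω → Bool) (NU : Ω → 𝒰) (NXn : Ω → NXt) (NTn : Ω → NTt) (NYn : Ω → NYt)
    (fX : 𝒰 → NXt → 𝒳) (fT : 𝒳 → NTt → Bool) (fY : 𝒳 → Bool → 𝒰 → NYt → Bool)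
    (P : Ω → Bool) (hP : P = NP)
    (U : Ω → 𝒰) (hU : U = NU)
    (X : Ω → 𝒳) (hX : X = fun ω => fX (U ω) (NXn ω))
    (T : Ω → Bool) (hT : T = fun ω => fT (X ω) (NTn ω) && P ω)
    (Y : Ω → Bool) (hY : Y = fun ω => fY (X ω) (T ω) (U ω) (NYn ω))
    (hindep : ∀ (a : Bool) (u : 𝒰) (nx : NXt) (nt : NTt) (ny : NYt),
      Pr pr (fun ω => NP ω = a ∧ NU ω = u ∧ NXn ω = nx ∧ NTn ω = nt ∧ NYn ω = ny)
        = Pr pr (fun ω => NP ω = a) * Pr pr (fun ω => NU ω = u)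
          * Pr pr (fun ω => NXn ω = nx) * Pr pr (fun ω => NTn ω = nt)
          * Pr pr (fun ω => NYn ω = ny)) :
    ∀ (p y : Bool) (x : 𝒳) (t : Bool),
      0 < Pr pr (fun ω => X ω = x ∧ T ω = t) →
      cPr pr (fun ω => P ω = p ∧ Y ω = y) (fun ω => X ω = x ∧ T ω = t)
        = cPr pr (fun ω => P ω = p) (fun ω => X ω = x ∧ T ω = t)
          * cPr pr (fun ω => Y ω = y) (fun ω => X ω = x ∧ T ω = t) := by
  intro p y x t hpos
  subst hP hU hX hT hY
  -- abbreviations for the marginal factors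
  set pP : Bool → ℝ := fun a => Pr pr (fun ω => P ω = a) with hpP
  set pU : 𝒰 → ℝ := fun u => Pr pr (fun ω => U ω = u) with hpU
  set pX : NXt → ℝ := fun nx => Pr pr (fun ω => NXn ω = nx) with hpX2
  set pT : NTt → ℝ := fun nt => Pr pr (fun ω => NTn ω = nt) with hpT2
  set pY : NYt → ℝ := fun ny => Pr pr (fun ω => NYn ω = ny) with hpY2
  -- the four factored quantities
  set A1 : ℝ := ∑ a : Bool, ∑ nt ∈ image NTn univ,
      (if a = p ∧ (fT x nt && a) = t then pP a * pT nt else 0) with hA1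
  set A0 : ℝ := ∑ a : Bool, ∑ nt ∈ image NTn univ,
      (if (fT x nt && a) = t then pP a * pT nt else 0) with hA0
  set B1 : ℝ := ∑ u ∈ image U univ, ∑ nx ∈ image NXn univ, ∑ ny ∈ image NYn univ,
      (if fX u nx = x ∧ fY x t u ny = y then pU u * pX nx * pY ny else 0) with hB1
  set B0 : ℝ := ∑ u ∈ image U univ, ∑ nx ∈ image NXn univ, ∑ ny ∈ image NYn univ,
      (if fX u nx = x then pU u * pX nx * pY ny else 0) with hB0
  have fact : ∀ (c1 c2 : Prop) (i : Decidable (c1 ∧ c2)) (i1 : Decidable c1)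
      (i2 : Decidable c2) (r1 r2 r3 r4 r5 : ℝ),
      (@ite ℝ (c1 ∧ c2) i (r1 * r2 * r3 * r4 * r5) 0)
        = (@ite ℝ c1 i1 (r1 * r4) 0) * (@ite ℝ c2 i2 (r2 * r3 * r5) 0) := by
    intro c1 c2 i i1 i2 r1 r2 r3 r4 r5
    by_cases h1 : c1 <;> by_cases h2 : c2 <;> simp [h1, h2] <;> ring
  -- identify the four probabilities
  have hD : Pr pr (fun ω => fX (U ω) (NXn ω) = x ∧ (fT (fX (U ω) (NXn ω)) (NTn ω) && P ω) = t)
      = A0 * B0 := by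
    rw [Pr_congr pr (B := fun ω => ((fT x (NTn ω) && P ω) = t) ∧ (fX (U ω) (NXn ω) = x))
        (fun ω => by constructor <;> rintro ⟨h1, h2⟩ <;>
          [ (exact ⟨by rw [h1] at h2; exact h2, h1⟩) ; (exact ⟨h2, by rw [h2]; exact h1⟩) ]),
      pr_expand pr P U NXn NTn NYn hindep
        (fun a u nx nt ny => ((fT x nt && a) = t) ∧ (fX u nx = x))]
    rw [hA0, hB0]
    rw [← sum_split]
    refine Finset.sum_congr rfl fun a _ => Finset.sum_congr rfl fun u _ =>
      Finset.sum_congr rfl fun nx _ => Finset.sum_congr rfl fun nt _ =>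
        Finset.sum_congr rfl fun ny _ => fact _ _ _ _ _ _ _ _ _ _
  have hN2 : Pr pr (fun ω => P ω = p ∧
      (fX (U ω) (NXn ω) = x ∧ (fT (fX (U ω) (NXn ω)) (NTn ω) && P ω) = t)) = A1 * B0 := by
    rw [Pr_congr pr
        (B := fun ω => (P ω = p ∧ (fT x (NTn ω) && P ω) = t) ∧ (fX (U ω) (NXn ω) = x))
        (fun ω => by
          constructor
          · rintro ⟨h0, h1, h2⟩
            exact ⟨⟨h0, by rw [h1] at h2; exact h2⟩, h1⟩
          · rintro ⟨⟨h0, h2⟩, h1⟩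
            exact ⟨h0, h1, by rw [h1]; exact h2⟩),
      pr_expand pr P U NXn NTn NYn hindep
        (fun a u nx nt ny => (a = p ∧ (fT x nt && a) = t) ∧ (fX u nx = x))]
    rw [hA1, hB0]
    rw [← sum_split]
    refine Finset.sum_congr rfl fun a _ => Finset.sum_congr rfl fun u _ =>
      Finset.sum_congr rfl fun nx _ => Finset.sum_congr rfl fun nt _ =>
        Finset.sum_congr rfl fun ny _ => fact _ _ _ _ _ _ _ _ _ _
  have hN3 : Pr pr (fun ω =>
      fY (fX (U ω) (NXn ω)) (fT (fX (U ω) (NXn ω)) (NTn ω) && P ω) (U ω) (NYn ω) = y ∧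
      (fX (U ω) (NXn ω) = x ∧ (fT (fX (U ω) (NXn ω)) (NTn ω) && P ω) = t)) = A0 * B1 := by
    rw [Pr_congr pr
        (B := fun ω => ((fT x (NTn ω) && P ω) = t) ∧
          (fX (U ω) (NXn ω) = x ∧ fY x t (U ω) (NYn ω) = y))
        (fun ω => by
          constructor
          · rintro ⟨h0, h1, h2⟩
            rw [h1] at h0 h2
            rw [h2] at h0
            exact ⟨h2, h1, h0⟩
          · rintro ⟨h2, h1, h0⟩
            exact ⟨by rw [h1, h2]; exact h0, h1, by rw [h1]; exact h2⟩),
      pr_expand pr P U NXn NTn NYn hindep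
        (fun a u nx nt ny => ((fT x nt && a) = t) ∧ (fX u nx = x ∧ fY x t u ny = y))]
    rw [hA0, hB1]
    rw [← sum_split]
    refine Finset.sum_congr rfl fun a _ => Finset.sum_congr rfl fun u _ =>
      Finset.sum_congr rfl fun nx _ => Finset.sum_congr rfl fun nt _ =>
        Finset.sum_congr rfl fun ny _ => fact _ _ _ _ _ _ _ _ _ _
  have hN1 : Pr pr (fun ω => (P ω = p ∧
      fY (fX (U ω) (NXn ω)) (fT (fX (U ω) (NXn ω)) (NTn ω) && P ω) (U ω) (NYn ω) = y) ∧
      (fX (U ω) (NXn ω) = x ∧ (fT (fX (U ω) (NXn ω)) (NTn ω) && P ω) = t)) = A1 * B1 := by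
    rw [Pr_congr pr
        (B := fun ω => (P ω = p ∧ (fT x (NTn ω) && P ω) = t) ∧
          (fX (U ω) (NXn ω) = x ∧ fY x t (U ω) (NYn ω) = y))
        (fun ω => by
          constructor
          · rintro ⟨⟨hp0, h0⟩, h1, h2⟩
            rw [h1] at h0 h2
            rw [h2] at h0
            exact ⟨⟨hp0, h2⟩, h1, h0⟩
          · rintro ⟨⟨hp0, h2⟩, h1, h0⟩
            exact ⟨⟨hp0, by rw [h1, h2]; exact h0⟩, h1, by rw [h1]; exact h2⟩),
      pr_expand pr P U NXn NTn NYn hindep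
        (fun a u nx nt ny => (a = p ∧ (fT x nt && a) = t) ∧
          (fX u nx = x ∧ fY x t u ny = y))]
    rw [hA1, hB1]
    rw [← sum_split]
    refine Finset.sum_congr rfl fun a _ => Finset.sum_congr rfl fun u _ =>
      Finset.sum_congr rfl fun nx _ => Finset.sum_congr rfl fun nt _ =>
        Finset.sum_congr rfl fun ny _ => fact _ _ _ _ _ _ _ _ _ _
  have hDpos : 0 < A0 * B0 := by rw [← hD]; exact hpos
  show (Pr pr (fun ω => (P ω = p ∧
      fY (fX (U ω) (NXn ω)) (fT (fX (U ω) (NXn ω)) (NTn ω) && P ω) (U ω) (NYn ω) = y) ∧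
      (fX (U ω) (NXn ω) = x ∧ (fT (fX (U ω) (NXn ω)) (NTn ω) && P ω) = t)))
      / (Pr pr (fun ω => fX (U ω) (NXn ω) = x ∧ (fT (fX (U ω) (NXn ω)) (NTn ω) && P ω) = t))
    = (Pr pr (fun ω => P ω = p ∧
        (fX (U ω) (NXn ω) = x ∧ (fT (fX (U ω) (NXn ω)) (NTn ω) && P ω) = t)))
      / (Pr pr (fun ω => fX (U ω) (NXn ω) = x ∧ (fT (fX (U ω) (NXn ω)) (NTn ω) && P ω) = t))
      * ((Pr pr (fun ω =>
          fY (fX (U ω) (NXn ω)) (fT (fX (U ω) (NXn ω)) (NTn ω) && P ω) (U ω) (NYn ω) = y ∧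
          (fX (U ω) (NXn ω) = x ∧ (fT (fX (U ω) (NXn ω)) (NTn ω) && P ω) = t)))
        / (Pr pr (fun ω => fX (U ω) (NXn ω) = x ∧ (fT (fX (U ω) (NXn ω)) (NTn ω) && P ω) = t)))
  rw [hN1, hN2, hN3, hD, div_mul_div_comm,
    div_eq_div_iff (ne_of_gt hDpos) (ne_of_gt (by positivity : (0:ℝ) < (A0*B0)*(A0*B0)))]
  ring
end

section
/- In the non-compliance SCM, the probability of positive outcome under prescription decomposes as: P(Y = 1 | do(P := 1), X = x) = P(Y = 1 | X = x, T = 0) + ITE(x)·γ(x), where ITE(x) = P(Y=1 | do(T:=1), X=x) − P(Y=1 | do(T:=0), X=x) and γ(x) = P(T = 1 | do(P := 1), X = x). -/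
open Classical Finset

/-- real-valued indicator of a proposition -/
noncomputable def ind (p : Prop) : ℝ := if p then 1 else 0

lemma ind_and (p q : Prop) : ind (p ∧ q) = ind p * ind q := by
  unfold ind; by_cases hp : p <;> by_cases hq : q <;> simp [hp, hq]

lemma ind_true : ind True = 1 := by simp [ind]

lemma Pr_eq {Ω : Type*} [Fintype Ω] (pr : Ω → ℝ) (A : Ω → Prop) :
    Pr pr A = ∑ ω, ind (A ω) * pr ω := by
  unfold Pr ind
  refine Finset.sum_congr rfl fun ω _ => ?_
  by_cases hA : A ω <;> simp [hA]

lemma Pr_add_of_disjoint {Ω : Type*} [Fintype Ω] (pr : Ω → ℝ) {A B : Ω → Prop}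
    (h : ∀ ω, ¬(A ω ∧ B ω)) :
    Pr pr (fun ω => A ω ∨ B ω) = Pr pr A + Pr pr B := by
  unfold Pr; rw [← Finset.sum_add_distrib]
  refine Finset.sum_congr rfl fun ω _ => ?_
  by_cases hA : A ω <;> by_cases hB : B ω <;> simp [hA, hB]
  exact (h ω ⟨hA, hB⟩).elim

lemma Pr_neg {Ω : Type*} [Fintype Ω] (pr : Ω → ℝ) (hsum : ∑ ω, pr ω = 1) (A : Ω → Prop) :
    Pr pr (fun ω => ¬ A ω) = 1 - Pr pr A := by
  have : Pr pr A + Pr pr (fun ω => ¬ A ω) = 1 := by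
    unfold Pr; rw [← Finset.sum_add_distrib, ← hsum]
    refine Finset.sum_congr rfl fun ω _ => ?_
    by_cases hA : A ω <;> simp [hA]
  linarith

lemma Pr_fiber {Ω K : Type*} [Fintype Ω] [DecidableEq K] (pr : Ω → ℝ) (V : Ω → K)
    (S : Finset K) (hS : ∀ ω, V ω ∈ S) (Q : K → Prop) :
    Pr pr (fun ω => Q (V ω)) = ∑ v ∈ S, ind (Q v) * Pr pr (fun ω => V ω = v) := by
  simp only [Pr_eq]
  have step : ∀ v, ind (Q v) * ∑ ω, ind (V ω = v) * pr ω
      = ∑ ω, ind (Q v ∧ V ω = v) * pr ω := by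
    intro v
    rw [Finset.mul_sum]
    refine Finset.sum_congr rfl fun ω _ => by rw [ind_and, mul_assoc]
  simp only [step]
  rw [Finset.sum_comm]
  refine Finset.sum_congr rfl fun ω _ => ?_
  rw [Finset.sum_eq_single (V ω)]
  · unfold ind
    by_cases hQ : Q (V ω) <;> simp [hQ]
  · intro v hv hne
    have : ¬(Q v ∧ V ω = v) := fun ⟨_, hV⟩ => hne hV.symm
    simp [ind, this]
  · intro hmem; exact absurd (hS ω) hmem

lemma Pr_marginal_one {Ω K : Type*} [Fintype Ω] [DecidableEq K] (pr : Ω → ℝ)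
    (hsum : ∑ ω, pr ω = 1) (V : Ω → K) :
    ∑ v ∈ Finset.univ.image V, Pr pr (fun ω => V ω = v) = 1 := by
  have := Pr_fiber pr V (Finset.univ.image V)
    (fun ω => Finset.mem_image_of_mem V (Finset.mem_univ ω)) (fun _ => True)
  simp only [ind_true, one_mul] at this
  rw [← this]
  unfold Pr
  simpa using hsum

lemma indep_expand {Ω 𝒰 NXt NTt NYt : Type*} [Fintype Ω]
    (pr : Ω → ℝ)
    (NP : Ω → Bool) (NU : Ω → 𝒰) (NXn : Ω → NXt) (NTn : Ω → NTt) (NYn : Ω → NYt)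
    (hindep : ∀ (a : Bool) (u : 𝒰) (nx : NXt) (nt : NTt) (ny : NYt),
      Pr pr (fun ω => NP ω = a ∧ NU ω = u ∧ NXn ω = nx ∧ NTn ω = nt ∧ NYn ω = ny)
        = Pr pr (fun ω => NP ω = a) * Pr pr (fun ω => NU ω = u)
          * Pr pr (fun ω => NXn ω = nx) * Pr pr (fun ω => NTn ω = nt)
          * Pr pr (fun ω => NYn ω = ny))
    (Q : Bool → 𝒰 → NXt → NTt → NYt → Prop) :
    Pr pr (fun ω => Q (NP ω) (NU ω) (NXn ω) (NTn ω) (NYn ω))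
      = ∑ a ∈ Finset.univ.image NP, ∑ u ∈ Finset.univ.image NU,
        ∑ nx ∈ Finset.univ.image NXn, ∑ nt ∈ Finset.univ.image NTn,
        ∑ ny ∈ Finset.univ.image NYn,
          ind (Q a u nx nt ny) *
            (Pr pr (fun ω => NP ω = a) * Pr pr (fun ω => NU ω = u)
              * Pr pr (fun ω => NXn ω = nx) * Pr pr (fun ω => NTn ω = nt)
              * Pr pr (fun ω => NYn ω = ny)) := by
  have := Pr_fiber pr
      (fun ω => (NP ω, NU ω, NXn ω, NTn ω, NYn ω))
      ((Finset.univ.image NP) ×ˢ (Finset.univ.image NU) ×ˢ (Finset.univ.image NXn)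
        ×ˢ (Finset.univ.image NTn) ×ˢ (Finset.univ.image NYn))
      (fun ω => by simp [Finset.mem_product, Finset.mem_image_of_mem])
      (fun v => Q v.1 v.2.1 v.2.2.1 v.2.2.2.1 v.2.2.2.2)
  simp only [Finset.sum_product] at this
  rw [this]
  refine Finset.sum_congr rfl fun a _ => Finset.sum_congr rfl fun u _ =>
    Finset.sum_congr rfl fun nx _ => Finset.sum_congr rfl fun nt _ =>
    Finset.sum_congr rfl fun ny _ => ?_
  congr 1
  rw [← hindep a u nx nt ny]
  exact Pr_congr pr fun ω => by simp [Prod.ext_iff, and_assoc]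

lemma indep_factor {Ω 𝒰 NXt NTt NYt : Type*} [Fintype Ω]
    (pr : Ω → ℝ) (hsum : ∑ ω, pr ω = 1)
    (NP : Ω → Bool) (NU : Ω → 𝒰) (NXn : Ω → NXt) (NTn : Ω → NTt) (NYn : Ω → NYt)
    (hindep : ∀ (a : Bool) (u : 𝒰) (nx : NXt) (nt : NTt) (ny : NYt),
      Pr pr (fun ω => NP ω = a ∧ NU ω = u ∧ NXn ω = nx ∧ NTn ω = nt ∧ NYn ω = ny)
        = Pr pr (fun ω => NP ω = a) * Pr pr (fun ω => NU ω = u)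
          * Pr pr (fun ω => NXn ω = nx) * Pr pr (fun ω => NTn ω = nt)
          * Pr pr (fun ω => NYn ω = ny))
    (g : 𝒰 → NXt → NYt → Prop) (h : Bool → NTt → Prop) :
    Pr pr (fun ω => g (NU ω) (NXn ω) (NYn ω) ∧ h (NP ω) (NTn ω))
      = Pr pr (fun ω => g (NU ω) (NXn ω) (NYn ω))
        * Pr pr (fun ω => h (NP ω) (NTn ω)) := by
  have split : ∀ (g' : 𝒰 → NXt → NYt → Prop) (h' : Bool → NTt → Prop),
      (∑ a ∈ Finset.univ.image NP, ∑ u ∈ Finset.univ.image NU,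
        ∑ nx ∈ Finset.univ.image NXn, ∑ nt ∈ Finset.univ.image NTn,
        ∑ ny ∈ Finset.univ.image NYn,
        ind (g' u nx ny ∧ h' a nt) *
          (Pr pr (fun ω => NP ω = a) * Pr pr (fun ω => NU ω = u)
            * Pr pr (fun ω => NXn ω = nx) * Pr pr (fun ω => NTn ω = nt)
            * Pr pr (fun ω => NYn ω = ny)))
      = (∑ u ∈ Finset.univ.image NU, ∑ nx ∈ Finset.univ.image NXn,
          ∑ ny ∈ Finset.univ.image NYn,
          ind (g' u nx ny) * (Pr pr (fun ω => NU ω = u) * Pr pr (fun ω => NXn ω = nx)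
            * Pr pr (fun ω => NYn ω = ny)))
        * (∑ a ∈ Finset.univ.image NP, ∑ nt ∈ Finset.univ.image NTn,
            ind (h' a nt) * (Pr pr (fun ω => NP ω = a) * Pr pr (fun ω => NTn ω = nt))) := by
    intro g' h'
    have step : ∀ (a : Bool) (u : 𝒰) (nx : NXt) (nt : NTt) (ny : NYt),
        ind (g' u nx ny ∧ h' a nt) *
          (Pr pr (fun ω => NP ω = a) * Pr pr (fun ω => NU ω = u)
            * Pr pr (fun ω => NXn ω = nx) * Pr pr (fun ω => NTn ω = nt)
            * Pr pr (fun ω => NYn ω = ny))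
        = (ind (g' u nx ny) * (Pr pr (fun ω => NU ω = u) * Pr pr (fun ω => NXn ω = nx)
            * Pr pr (fun ω => NYn ω = ny)))
          * (ind (h' a nt) * (Pr pr (fun ω => NP ω = a) * Pr pr (fun ω => NTn ω = nt))) := by
      intro a u nx nt ny
      rw [ind_and]; ring
    simp only [step]
    simp only [← Finset.sum_mul, ← Finset.mul_sum]
    try ring
  have onesH : (∑ a ∈ Finset.univ.image NP, ∑ nt ∈ Finset.univ.image NTn,
      Pr pr (fun ω => NP ω = a) * Pr pr (fun ω => NTn ω = nt)) = 1 := by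
    rw [← Finset.sum_mul_sum, Pr_marginal_one pr hsum NP, Pr_marginal_one pr hsum NTn]
    try norm_num
  have onesG : (∑ u ∈ Finset.univ.image NU, ∑ nx ∈ Finset.univ.image NXn,
      ∑ ny ∈ Finset.univ.image NYn,
      Pr pr (fun ω => NU ω = u) * Pr pr (fun ω => NXn ω = nx)
        * Pr pr (fun ω => NYn ω = ny)) = 1 := by
    have step : ∀ (u : 𝒰) (nx : NXt), (∑ ny ∈ Finset.univ.image NYn,
        Pr pr (fun ω => NU ω = u) * Pr pr (fun ω => NXn ω = nx)
          * Pr pr (fun ω => NYn ω = ny))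
        = Pr pr (fun ω => NU ω = u) * Pr pr (fun ω => NXn ω = nx) := by
      intro u nx
      rw [← Finset.mul_sum, Pr_marginal_one pr hsum NYn, mul_one]
    simp only [step]
    rw [← Finset.sum_mul_sum, Pr_marginal_one pr hsum NU, Pr_marginal_one pr hsum NXn]
    try norm_num
  have eGH := (indep_expand pr NP NU NXn NTn NYn hindep
      (fun a u nx nt ny => g u nx ny ∧ h a nt)).trans (split g h)
  have eG : Pr pr (fun ω => g (NU ω) (NXn ω) (NYn ω))
      = Pr pr (fun ω => g (NU ω) (NXn ω) (NYn ω) ∧ True) :=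
    Pr_congr pr fun ω => by simp
  have eG2 : Pr pr (fun ω => g (NU ω) (NXn ω) (NYn ω) ∧ True)
      = (∑ u ∈ Finset.univ.image NU, ∑ nx ∈ Finset.univ.image NXn,
          ∑ ny ∈ Finset.univ.image NYn,
          ind (g u nx ny) * (Pr pr (fun ω => NU ω = u) * Pr pr (fun ω => NXn ω = nx)
            * Pr pr (fun ω => NYn ω = ny)))
        * (∑ a ∈ Finset.univ.image NP, ∑ nt ∈ Finset.univ.image NTn,
            ind True * (Pr pr (fun ω => NP ω = a) * Pr pr (fun ω => NTn ω = nt))) :=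
    (indep_expand pr NP NU NXn NTn NYn hindep
      (fun a u nx nt ny => g u nx ny ∧ True)).trans
      (split g (fun _ _ => True))
  have eH : Pr pr (fun ω => h (NP ω) (NTn ω))
      = Pr pr (fun ω => True ∧ h (NP ω) (NTn ω)) :=
    Pr_congr pr fun ω => by simp
  have eH2 : Pr pr (fun ω => True ∧ h (NP ω) (NTn ω))
      = (∑ u ∈ Finset.univ.image NU, ∑ nx ∈ Finset.univ.image NXn,
          ∑ ny ∈ Finset.univ.image NYn,
          ind True * (Pr pr (fun ω => NU ω = u) * Pr pr (fun ω => NXn ω = nx)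
            * Pr pr (fun ω => NYn ω = ny)))
        * (∑ a ∈ Finset.univ.image NP, ∑ nt ∈ Finset.univ.image NTn,
            ind (h a nt) * (Pr pr (fun ω => NP ω = a) * Pr pr (fun ω => NTn ω = nt))) :=
    (indep_expand pr NP NU NXn NTn NYn hindep
      (fun a u nx nt ny => True ∧ h a nt)).trans
      (split (fun _ _ _ => True) h)
  simp only [ind_true, one_mul] at eG2 eH2
  rw [onesH, mul_one] at eG2
  rw [onesG, one_mul] at eH2
  rw [eGH, eG, eG2, eH, eH2]

/-- Lemma 1: In the non-compliance SCM,
P(Y = 1 | do(P := 1), X = x) = P(Y = 1 | X = x, T = 0) + ITE(x)·γ(x),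
where ITE(x) = P(Y=1 | do(T:=1), X=x) − P(Y=1 | do(T:=0), X=x) and
γ(x) = P(T = 1 | do(P := 1), X = x).  Interventional quantities are obtained by
substituting the corresponding constant in the structural assignments. -/
theorem stmt4
    {Ω 𝒰 𝒳 NXt NTt NYt : Type*} [Fintype Ω]
    (pr : Ω → ℝ) (hpr : ∀ ω, 0 ≤ pr ω) (hsum : ∑ ω, pr ω = 1)
    (NP : Ω → Bool) (NU : Ω → 𝒰) (NXn : Ω → NXt) (NTn : Ω → NTt) (NYn : Ω → NYt)
    (fX : 𝒰 → NXt → 𝒳) (fT : 𝒳 → NTt → Bool) (fY : 𝒳 → Bool → 𝒰 → NYt → Bool)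
    (P : Ω → Bool) (hP : P = NP)
    (U : Ω → 𝒰) (hU : U = NU)
    (X : Ω → 𝒳) (hX : X = fun ω => fX (U ω) (NXn ω))
    (T : Ω → Bool) (hT : T = fun ω => fT (X ω) (NTn ω) && P ω)
    (Y : Ω → Bool) (hY : Y = fun ω => fY (X ω) (T ω) (U ω) (NYn ω))
    (hindep : ∀ (a : Bool) (u : 𝒰) (nx : NXt) (nt : NTt) (ny : NYt),
      Pr pr (fun ω => NP ω = a ∧ NU ω = u ∧ NXn ω = nx ∧ NTn ω = nt ∧ NYn ω = ny)
        = Pr pr (fun ω => NP ω = a) * Pr pr (fun ω => NU ω = u)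
          * Pr pr (fun ω => NXn ω = nx) * Pr pr (fun ω => NTn ω = nt)
          * Pr pr (fun ω => NYn ω = ny))
    (x : 𝒳)
    (hx : 0 < Pr pr (fun ω => X ω = x))
    (hx0 : 0 < Pr pr (fun ω => X ω = x ∧ T ω = false))
    (hx1 : 0 < Pr pr (fun ω => X ω = x ∧ T ω = true)) :
    -- P(Y=1 | do(P:=1), X=x)
    cPr pr (fun ω => fY (X ω) (fT (X ω) (NTn ω) && true) (U ω) (NYn ω) = true)
        (fun ω => X ω = x)
      = cPr pr (fun ω => Y ω = true) (fun ω => X ω = x ∧ T ω = false)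
        + (cPr pr (fun ω => fY (X ω) true (U ω) (NYn ω) = true) (fun ω => X ω = x)
            - cPr pr (fun ω => fY (X ω) false (U ω) (NYn ω) = true) (fun ω => X ω = x))
          * cPr pr (fun ω => (fT (X ω) (NTn ω) && true) = true) (fun ω => X ω = x) := by
  subst hY hT hX hU hP
  -- abbreviations
  set px := Pr pr (fun ω => fX (U ω) (NXn ω) = x) with hpx
  have N1 : Pr pr (fun ω =>
      fY (fX (U ω) (NXn ω)) (fT (fX (U ω) (NXn ω)) (NTn ω) && true) (U ω) (NYn ω) = true
        ∧ fX (U ω) (NXn ω) = x)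
      = Pr pr (fun ω => fX (U ω) (NXn ω) = x ∧ fY x true (U ω) (NYn ω) = true)
          * Pr pr (fun ω => fT x (NTn ω) = true)
        + Pr pr (fun ω => fX (U ω) (NXn ω) = x ∧ fY x false (U ω) (NYn ω) = true)
          * (1 - Pr pr (fun ω => fT x (NTn ω) = true)) := by
    have c1 : Pr pr (fun ω =>
        fY (fX (U ω) (NXn ω)) (fT (fX (U ω) (NXn ω)) (NTn ω) && true) (U ω) (NYn ω) = true
          ∧ fX (U ω) (NXn ω) = x)
        = Pr pr (fun ω =>
            ((fX (U ω) (NXn ω) = x ∧ fY x true (U ω) (NYn ω) = true)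
              ∧ fT x (NTn ω) = true)
            ∨ ((fX (U ω) (NXn ω) = x ∧ fY x false (U ω) (NYn ω) = true)
              ∧ ¬ (fT x (NTn ω) = true))) := by
      refine Pr_congr pr fun ω => ?_
      constructor
      · rintro ⟨hy, hxx⟩
        rw [hxx] at hy
        simp only [Bool.and_true] at hy
        by_cases hA : fT x (NTn ω) = true
        · exact Or.inl ⟨⟨hxx, by rwa [hA] at hy⟩, hA⟩
        · have hA' : fT x (NTn ω) = false := by simpa using hA
          exact Or.inr ⟨⟨hxx, by rwa [hA'] at hy⟩, hA⟩
      · rintro (⟨⟨hxx, hb⟩, hA⟩ | ⟨⟨hxx, hb⟩, hA⟩)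
        · exact ⟨by rw [hxx]; simp [hA, hb], hxx⟩
        · have hA' : fT x (NTn ω) = false := by simpa using hA
          exact ⟨by rw [hxx]; simp [hA', hb], hxx⟩
    rw [c1, Pr_add_of_disjoint pr (fun ω => by rintro ⟨⟨-, hA⟩, ⟨-, hnA⟩⟩; exact hnA hA)]
    rw [indep_factor pr hsum P U NXn NTn NYn hindep
        (fun u nx ny => fX u nx = x ∧ fY x true u ny = true) (fun _ nt => fT x nt = true),
      indep_factor pr hsum P U NXn NTn NYn hindep
        (fun u nx ny => fX u nx = x ∧ fY x false u ny = true)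
        (fun _ nt => ¬ (fT x nt = true)),
      Pr_neg pr hsum (fun ω => fT x (NTn ω) = true)]
  have N2 : Pr pr (fun ω =>
      fY (fX (U ω) (NXn ω)) (fT (fX (U ω) (NXn ω)) (NTn ω) && P ω) (U ω) (NYn ω) = true
        ∧ (fX (U ω) (NXn ω) = x ∧ (fT (fX (U ω) (NXn ω)) (NTn ω) && P ω) = false))
      = Pr pr (fun ω => fX (U ω) (NXn ω) = x ∧ fY x false (U ω) (NYn ω) = true)
        * Pr pr (fun ω => ¬ (fT x (NTn ω) = true ∧ P ω = true)) := by
    have c2 : Pr pr (fun ω =>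
        fY (fX (U ω) (NXn ω)) (fT (fX (U ω) (NXn ω)) (NTn ω) && P ω) (U ω) (NYn ω) = true
          ∧ (fX (U ω) (NXn ω) = x ∧ (fT (fX (U ω) (NXn ω)) (NTn ω) && P ω) = false))
        = Pr pr (fun ω =>
            (fX (U ω) (NXn ω) = x ∧ fY x false (U ω) (NYn ω) = true)
              ∧ ¬ (fT x (NTn ω) = true ∧ P ω = true)) := by
      refine Pr_congr pr fun ω => ?_
      constructor
      · rintro ⟨hy, hxx, ht⟩
        rw [hxx] at hy ht
        refine ⟨⟨hxx, by rwa [ht] at hy⟩, ?_⟩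
        rintro ⟨h1, h2⟩
        rw [h1, h2] at ht
        simp at ht
      · rintro ⟨⟨hxx, hb⟩, hn⟩
        have ht : (fT x (NTn ω) && P ω) = false := by
          cases h1 : fT x (NTn ω) <;> cases h2 : P ω <;> simp_all
        refine ⟨?_, hxx, ?_⟩
        · rw [hxx, ht]; exact hb
        · rw [hxx]; exact ht
    rw [c2, indep_factor pr hsum P U NXn NTn NYn hindep
        (fun u nx ny => fX u nx = x ∧ fY x false u ny = true)
        (fun a nt => ¬ (fT x nt = true ∧ a = true))]
  have N3 : Pr pr (fun ω => fX (U ω) (NXn ω) = x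
        ∧ (fT (fX (U ω) (NXn ω)) (NTn ω) && P ω) = false)
      = px * Pr pr (fun ω => ¬ (fT x (NTn ω) = true ∧ P ω = true)) := by
    have c3 : Pr pr (fun ω => fX (U ω) (NXn ω) = x
          ∧ (fT (fX (U ω) (NXn ω)) (NTn ω) && P ω) = false)
        = Pr pr (fun ω => fX (U ω) (NXn ω) = x
            ∧ ¬ (fT x (NTn ω) = true ∧ P ω = true)) := by
      refine Pr_congr pr fun ω => ?_
      constructor
      · rintro ⟨hxx, ht⟩
        rw [hxx] at ht
        refine ⟨hxx, ?_⟩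
        rintro ⟨h1, h2⟩
        rw [h1, h2] at ht
        simp at ht
      · rintro ⟨hxx, hn⟩
        have ht : (fT x (NTn ω) && P ω) = false := by
          cases h1 : fT x (NTn ω) <;> cases h2 : P ω <;> simp_all
        exact ⟨hxx, by rw [hxx]; exact ht⟩
    rw [c3, indep_factor pr hsum P U NXn NTn NYn hindep
        (fun u nx _ => fX u nx = x) (fun a nt => ¬ (fT x nt = true ∧ a = true))]
  have N4 : Pr pr (fun ω => fY (fX (U ω) (NXn ω)) true (U ω) (NYn ω) = true
        ∧ fX (U ω) (NXn ω) = x)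
      = Pr pr (fun ω => fX (U ω) (NXn ω) = x ∧ fY x true (U ω) (NYn ω) = true) := by
    refine Pr_congr pr fun ω => ?_
    constructor
    · rintro ⟨hy, hxx⟩; exact ⟨hxx, by rwa [hxx] at hy⟩
    · rintro ⟨hxx, hy⟩; exact ⟨by rwa [hxx], hxx⟩
  have N5 : Pr pr (fun ω => fY (fX (U ω) (NXn ω)) false (U ω) (NYn ω) = true
        ∧ fX (U ω) (NXn ω) = x)
      = Pr pr (fun ω => fX (U ω) (NXn ω) = x ∧ fY x false (U ω) (NYn ω) = true) := by
    refine Pr_congr pr fun ω => ?_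
    constructor
    · rintro ⟨hy, hxx⟩; exact ⟨hxx, by rwa [hxx] at hy⟩
    · rintro ⟨hxx, hy⟩; exact ⟨by rwa [hxx], hxx⟩
  have N6 : Pr pr (fun ω => (fT (fX (U ω) (NXn ω)) (NTn ω) && true) = true
        ∧ fX (U ω) (NXn ω) = x)
      = px * Pr pr (fun ω => fT x (NTn ω) = true) := by
    have c6 : Pr pr (fun ω => (fT (fX (U ω) (NXn ω)) (NTn ω) && true) = true
          ∧ fX (U ω) (NXn ω) = x)
        = Pr pr (fun ω => fX (U ω) (NXn ω) = x ∧ fT x (NTn ω) = true) := by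
      refine Pr_congr pr fun ω => ?_
      constructor
      · rintro ⟨ha, hxx⟩
        rw [hxx] at ha
        simp only [Bool.and_true] at ha
        exact ⟨hxx, ha⟩
      · rintro ⟨hxx, ha⟩
        refine ⟨?_, hxx⟩
        rw [hxx]
        simp [ha]
    rw [c6, indep_factor pr hsum P U NXn NTn NYn hindep
        (fun u nx _ => fX u nx = x) (fun _ nt => fT x nt = true)]
  have hpx0 : 0 < px := hx
  have hc2pos : 0 < Pr pr (fun ω => ¬ (fT x (NTn ω) = true ∧ P ω = true)) := by
    have h0 := hx0
    rw [N3] at h0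
    rcases mul_pos_iff.1 h0 with ⟨-, h⟩ | ⟨h, -⟩
    · exact h
    · linarith
  simp only [cPr]
  rw [N1, N2, N3, N4, N5, N6]
  set pb1 := Pr pr (fun ω => fX (U ω) (NXn ω) = x ∧ fY x true (U ω) (NYn ω) = true) with hpb1
  set pb0 := Pr pr (fun ω => fX (U ω) (NXn ω) = x ∧ fY x false (U ω) (NYn ω) = true) with hpb0
  set q := Pr pr (fun ω => fT x (NTn ω) = true) with hq
  set c2 := Pr pr (fun ω => ¬ (fT x (NTn ω) = true ∧ P ω = true)) with hc2
  have hpxne : px ≠ 0 := ne_of_gt hpx0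
  have hc2ne : c2 ≠ 0 := ne_of_gt hc2pos
  simp only [← hpx]
  field_simp
  ring
end

section
/- In the non-compliance SCM, the outcome under no prescription equals the outcome under no treatment: P(Y = 1 | do(P := 0), X = x) = P(Y = 1 | T = 0, X = x) for every x with P(X = x) > 0 and P(T = 0, X = x) > 0. -/
open Classical Finset

lemma Pr_sum_fibers {Ω : Type*} {α : Type*} [Fintype Ω] (pr : Ω → ℝ)
    (f : Ω → α) (S : Finset α) (hS : ∀ ω, f ω ∈ S) (E : α → Prop) :
    Pr pr (fun ω => E (f ω)) = ∑ τ ∈ S, if E τ then Pr pr (fun ω => f ω = τ) else 0 := by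
  have key : ∀ τ, (if E τ then Pr pr (fun ω => f ω = τ) else 0)
      = ∑ ω : Ω, if E τ ∧ f ω = τ then pr ω else 0 := by
    intro τ; by_cases h : E τ <;> simp [Pr, h]
  rw [Finset.sum_congr rfl (fun τ _ => key τ), Finset.sum_comm]
  unfold Pr
  refine Finset.sum_congr rfl fun ω _ => ?_
  rw [Finset.sum_eq_single_of_mem (f ω) (hS ω)]
  · simp
  · intro τ _ hne
    rw [if_neg]
    rintro ⟨_, h⟩
    exact hne h.symm

/-- In the non-compliance SCM, the outcome under no prescription equals
the outcome under no treatment: P(Y = 1 | do(P := 0), X = x) = P(Y = 1 | T = 0, X = x)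
for every x with P(X = x) > 0 and P(T = 0, X = x) > 0. -/
theorem stmt15
    {Ω 𝒰 𝒳 NXt NTt NYt : Type*} [Fintype Ω]
    (pr : Ω → ℝ) (hpr : ∀ ω, 0 ≤ pr ω) (hsum : ∑ ω, pr ω = 1)
    (NP : Ω → Bool) (NU : Ω → 𝒰) (NXn : Ω → NXt) (NTn : Ω → NTt) (NYn : Ω → NYt)
    (fX : 𝒰 → NXt → 𝒳) (fT : 𝒳 → NTt → Bool) (fY : 𝒳 → Bool → 𝒰 → NYt → Bool)
    (P : Ω → Bool) (hP : P = NP)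
    (U : Ω → 𝒰) (hU : U = NU)
    (X : Ω → 𝒳) (hX : X = fun ω => fX (U ω) (NXn ω))
    (T : Ω → Bool) (hT : T = fun ω => fT (X ω) (NTn ω) && P ω)
    (Y : Ω → Bool) (hY : Y = fun ω => fY (X ω) (T ω) (U ω) (NYn ω))
    (hindep : ∀ (a : Bool) (u : 𝒰) (nx : NXt) (nt : NTt) (ny : NYt),
      Pr pr (fun ω => NP ω = a ∧ NU ω = u ∧ NXn ω = nx ∧ NTn ω = nt ∧ NYn ω = ny)
        = Pr pr (fun ω => NP ω = a) * Pr pr (fun ω => NU ω = u)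
          * Pr pr (fun ω => NXn ω = nx) * Pr pr (fun ω => NTn ω = nt)
          * Pr pr (fun ω => NYn ω = ny))
    (x : 𝒳)
    (hx : 0 < Pr pr (fun ω => X ω = x))
    (hx0 : 0 < Pr pr (fun ω => T ω = false ∧ X ω = x)) :
    -- P(Y = 1 | do(P := 0), X = x): under do(P:=0), T ≡ 0 and Y = f_Y(X, 0, U, N_Y)
    cPr pr (fun ω => fY (X ω) (fT (X ω) (NTn ω) && false) (U ω) (NYn ω) = true)
        (fun ω => X ω = x)
      = cPr pr (fun ω => Y ω = true) (fun ω => T ω = false ∧ X ω = x) := by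
  classical
  subst hP hU hX hT hY
  simp only at hx hx0 ⊢
  -- group the noises
  set g : Ω → Bool × NTt := fun ω => (P ω, NTn ω) with hg
  set h : Ω → 𝒰 × NXt × NYt := fun ω => (U ω, NXn ω, NYn ω) with hh
  set S2 : Finset (Bool × NTt) := Finset.univ.image g with hS2
  set S3 : Finset (𝒰 × NXt × NYt) := Finset.univ.image h with hS3
  set φ : Bool × NTt → ℝ :=
    fun p => Pr pr (fun ω => P ω = p.1) * Pr pr (fun ω => NTn ω = p.2) with hφ
  set ψ : 𝒰 × NXt × NYt → ℝ :=
    fun q => Pr pr (fun ω => U ω = q.1) * Pr pr (fun ω => NXn ω = q.2.1)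
      * Pr pr (fun ω => NYn ω = q.2.2) with hψ
  have hq : ∀ p q, Pr pr (fun ω => (g ω, h ω) = (p, q)) = φ p * ψ q := by
    rintro ⟨a, nt⟩ ⟨u, nx, ny⟩
    have h1 := hindep a u nx nt ny
    have h2 : ∀ ω, ((g ω, h ω) = ((a, nt), (u, nx, ny)))
        ↔ (P ω = a ∧ U ω = u ∧ NXn ω = nx ∧ NTn ω = nt ∧ NYn ω = ny) := by
      intro ω; simp [hg, hh, Prod.ext_iff]; tauto
    rw [Pr_congr pr h2, h1, hφ, hψ]
    ring
  have expand : ∀ (E2 : Bool × NTt → Prop) (E3 : 𝒰 × NXt × NYt → Prop),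
      Pr pr (fun ω => E2 (g ω) ∧ E3 (h ω))
        = (∑ p ∈ S2, if E2 p then φ p else 0) * (∑ q ∈ S3, if E3 q then ψ q else 0) := by
    intro E2 E3
    have hmem : ∀ ω, (g ω, h ω) ∈ S2 ×ˢ S3 := by
      intro ω
      exact Finset.mem_product.2 ⟨Finset.mem_image_of_mem g (Finset.mem_univ ω),
        Finset.mem_image_of_mem h (Finset.mem_univ ω)⟩
    have hf := Pr_sum_fibers pr (fun ω => (g ω, h ω)) (S2 ×ˢ S3) hmem
      (fun τ => E2 τ.1 ∧ E3 τ.2)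
    simp only at hf
    rw [show (fun ω => E2 (g ω) ∧ E3 (h ω)) = fun ω => E2 (g ω, h ω).1 ∧ E3 (g ω, h ω).2 from rfl]
    rw [hf, Finset.sum_product, Finset.sum_mul_sum]
    refine Finset.sum_congr rfl fun p _ => Finset.sum_congr rfl fun q _ => ?_
    rw [hq p q]
    by_cases h2 : E2 p <;> by_cases h3 : E3 q <;> simp [h2, h3]
  -- the three event predicates
  set Bev : Bool × NTt → Prop := fun p => (fT x p.2 && p.1) = false with hBev
  set Aev : 𝒰 × NXt × NYt → Prop :=
    fun q => fX q.1 q.2.1 = x ∧ fY x false q.1 q.2.2 = true with hAev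
  set Xev : 𝒰 × NXt × NYt → Prop := fun q => fX q.1 q.2.1 = x with hXev
  set Tev : Bool × NTt → Prop := fun _ => True with hTev
  have hiff1 : ∀ ω,
      (fY (fX (U ω) (NXn ω)) (fT (fX (U ω) (NXn ω)) (NTn ω) && false) (U ω) (NYn ω) = true
        ∧ fX (U ω) (NXn ω) = x) ↔ (Tev (g ω) ∧ Aev (h ω)) := by
    intro ω
    simp only [hAev, hTev, hg, hh, Bool.and_false, true_and]
    constructor
    · rintro ⟨h1, h2⟩; exact ⟨h2, h2 ▸ h1⟩
    · rintro ⟨h1, h2⟩; exact ⟨h1 ▸ h2, h1⟩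
  have hiff2 : ∀ ω, (fX (U ω) (NXn ω) = x) ↔ (Tev (g ω) ∧ Xev (h ω)) := by
    intro ω; simp [hXev, hTev, hh]
  have hiff3 : ∀ ω, ((fT (fX (U ω) (NXn ω)) (NTn ω) && P ω) = false ∧ fX (U ω) (NXn ω) = x)
      ↔ (Bev (g ω) ∧ Xev (h ω)) := by
    intro ω
    simp only [hBev, hXev, hg, hh]
    constructor
    · rintro ⟨h1, h2⟩; exact ⟨h2 ▸ h1, h2⟩
    · rintro ⟨h1, h2⟩; exact ⟨h2 ▸ h1, h2⟩
  have hiff4 : ∀ ω,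
      (fY (fX (U ω) (NXn ω)) (fT (fX (U ω) (NXn ω)) (NTn ω) && P ω) (U ω) (NYn ω) = true
        ∧ (fT (fX (U ω) (NXn ω)) (NTn ω) && P ω) = false ∧ fX (U ω) (NXn ω) = x)
      ↔ (Bev (g ω) ∧ Aev (h ω)) := by
    intro ω
    simp only [hBev, hAev, hg, hh]
    constructor
    · rintro ⟨h1, h2, h3⟩
      refine ⟨h3 ▸ h2, h3, ?_⟩
      rw [← h3, ← h2]; exact h1
    · rintro ⟨h1, h2, h3⟩
      have h1' : (fT (fX (U ω) (NXn ω)) (NTn ω) && P ω) = false := h2 ▸ h1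
      refine ⟨?_, h1', h2⟩
      rw [h1', h2]; exact h3
  have eNum1 := (Pr_congr pr hiff1).trans (expand Tev Aev)
  have eDen1 := (Pr_congr pr hiff2).trans (expand Tev Xev)
  have eDen2 := (Pr_congr pr hiff3).trans (expand Bev Xev)
  have eNum2 := (Pr_congr pr hiff4).trans (expand Bev Aev)
  have key : ∀ (a b c d : ℝ), 0 < a * c → 0 < b * c → (a * d) / (a * c) = (b * d) / (b * c) := by
    intro a b c d h1 h2
    have ha : a ≠ 0 := by rintro rfl; rw [zero_mul] at h1; exact lt_irrefl 0 h1
    have hb : b ≠ 0 := by rintro rfl; rw [zero_mul] at h2; exact lt_irrefl 0 h2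
    rw [mul_div_mul_left _ _ ha, mul_div_mul_left _ _ hb]
  rw [eDen1] at hx
  rw [eDen2] at hx0
  unfold cPr
  rw [eNum1, eDen1, eNum2, eDen2]
  exact key _ _ _ _ hx hx0
end
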